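/- (Pre-test independence under homoskedasticity.) Suppose Y = Zπ + Dτ + ε with Var(ε) = σ²I. Let τ̂_w* be the efficient linear unbiased estimator of some weighted treatment-effect estimand (constructed under some treatment-effect model Γ), and let γ̂ be the OLS coefficient vector on extra regressors W in a regression of Y₀ on (Z₀, W₀) using untreated observations only. If the true data satisfy E[Y₀] = Z₀π (so E[γ̂] = 0 whenever γ is identified), then Cov(τ̂_w*, γ̂) = 0. -/

import Mathlib

open MeasureTheory Matrix

/-- Pre-test independence under homoskedasticity.  In the model
`Y = Zπ + DΓθ + ε` with `Var(ε) = σ²I` (rows split into treated `Fin N₁` and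
untreated `Fin N₀` blocks, `D` selecting treated rows, full design
`G = (Z, DΓ)` of full column rank), let `τ̂_w* = w₁'Γθ̂` be the efficient
linear unbiased estimator, and let `γ̂` be the OLS coefficient vector on the
extra regressors `W₀` in a regression of `Y₀` on `(Z₀, W₀)` using untreated
observations only (design `G₀ = (Z₀, W₀)` of full column rank).  If the true
means satisfy `E[Y₀] = Z₀π` (so `E[γ̂] = 0`), then `Cov(τ̂_w*, γ̂_l) = 0` for
every component `l`. -/

lemma key_ols {N₀ p q : ℕ} (Z₀ : Matrix (Fin N₀) (Fin p) ℝ) (W₀ : Matrix (Fin N₀) (Fin q) ℝ)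
    (G₀ : Matrix (Fin N₀) (Fin p ⊕ Fin q) ℝ) (hG₀ : G₀ = Matrix.fromCols Z₀ W₀)
    (hrank₀ : IsUnit (G₀ᵀ * G₀).det) (v : Fin p → ℝ) (l : Fin q) :
    ((G₀ᵀ * G₀)⁻¹ *ᵥ (G₀ᵀ *ᵥ (Z₀ *ᵥ v))) (Sum.inr l) = 0 := by
  have h1 : Z₀ *ᵥ v = G₀ *ᵥ Sum.elim v 0 := by
    rw [hG₀, Matrix.fromCols_mulVec_sumElim]
    simp
  rw [h1, Matrix.mulVec_mulVec, Matrix.mulVec_mulVec, Matrix.mul_assoc,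
    ← Matrix.mulVec_mulVec, Matrix.mulVec_mulVec,
    Matrix.nonsing_inv_mul _ hrank₀, Matrix.one_mulVec]
  simp

lemma int_mul {Ωm : Type*} [MeasurableSpace Ωm] {μ : Measure Ωm}
    {f g : Ωm → ℝ} (hf : MeasureTheory.MemLp f 2 μ) (hg : MeasureTheory.MemLp g 2 μ) :
    Integrable (fun ω => f ω * g ω) μ := by
  have h : MeasureTheory.MemLp (g • f) 1 μ :=
    hf.smul hg (hpqr := ⟨by simp only [one_div, inv_one]; rw [ENNReal.inv_two_add_inv_two]⟩)
  have := memLp_one_iff_integrable.mp h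
  exact (by simpa [Pi.smul_apply, smul_eq_mul, mul_comm] using this : Integrable (f * g) μ)


theorem pretest_uncorrelated {Ωm : Type*} [MeasurableSpace Ωm]
    (μ : Measure Ωm) [IsProbabilityMeasure μ]
    (N₁ N₀ p k q : ℕ)
    (Z₁ : Matrix (Fin N₁) (Fin p) ℝ) (Z₀ : Matrix (Fin N₀) (Fin p) ℝ)
    (Z : Matrix (Fin N₁ ⊕ Fin N₀) (Fin p) ℝ) (hZ : Z = Matrix.of (Sum.elim Z₁ Z₀))
    (D : Matrix (Fin N₁ ⊕ Fin N₀) (Fin N₁) ℝ)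
    (hD : ∀ r j, D r j = if r = Sum.inl j then 1 else 0)
    (Γ : Matrix (Fin N₁) (Fin k) ℝ) (w₁ : Fin N₁ → ℝ)
    (G : Matrix (Fin N₁ ⊕ Fin N₀) (Fin p ⊕ Fin k) ℝ)
    (hG : G = Matrix.fromCols Z (D * Γ))
    (hrank : IsUnit (Gᵀ * G).det)
    (W₀ : Matrix (Fin N₀) (Fin q) ℝ)
    (G₀ : Matrix (Fin N₀) (Fin p ⊕ Fin q) ℝ)
    (hG₀ : G₀ = Matrix.fromCols Z₀ W₀)
    (hrank₀ : IsUnit (G₀ᵀ * G₀).det)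
    -- the random outcomes: mean vector `m`, homoskedastic uncorrelated errors
    (Y : Ωm → (Fin N₁ ⊕ Fin N₀) → ℝ) (m : (Fin N₁ ⊕ Fin N₀) → ℝ) (σ2 : ℝ)
    (hL2 : ∀ r, MemLp (fun ω => Y ω r) 2 μ)
    (hmean : ∀ r, ∫ ω, Y ω r ∂μ = m r)
    (hcov : ∀ r s, ∫ ω, (Y ω r - m r) * (Y ω s - m s) ∂μ
        = if r = s then σ2 else 0)
    -- the maintained model on the untreated observations: E[Y₀] = Z₀π
    (π : Fin p → ℝ) (hmodel : ∀ r : Fin N₀, m (Sum.inr r) = (Z₀ *ᵥ π) r)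
    -- the efficient estimator τ̂_w* = w₁'Γθ̂ with θ̂ from the full OLS
    (τhat : Ωm → ℝ)
    (hτhat : ∀ ω, τhat ω
      = w₁ ⬝ᵥ (Γ *ᵥ fun j => ((Gᵀ * G)⁻¹ *ᵥ (Gᵀ *ᵥ Y ω)) (Sum.inr j))
    -- the pre-trend coefficients γ̂ from untreated observations only
    ) (γhat : Ωm → Fin q → ℝ)
    (hγhat : ∀ ω l, γhat ω l
      = ((G₀ᵀ * G₀)⁻¹ *ᵥ (G₀ᵀ *ᵥ fun r => Y ω (Sum.inr r))) (Sum.inr l)) :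
    (∀ l, ∫ ω, γhat ω l ∂μ = 0) ∧
    ∀ l, ∫ ω, (τhat ω - ∫ ω', τhat ω' ∂μ)
        * (γhat ω l - ∫ ω', γhat ω' l ∂μ) ∂μ = 0 := by
  classical
  -- coefficient vectors
  set M₀ : Matrix (Fin p ⊕ Fin q) (Fin N₀) ℝ := (G₀ᵀ * G₀)⁻¹ * G₀ᵀ with hM₀
  set B : Fin q → Fin N₀ → ℝ := fun l s => M₀ (Sum.inr l) s with hB
  set c : (Fin p ⊕ Fin k) → ℝ := Sum.elim 0 (Γᵀ *ᵥ w₁) with hc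
  set u : (Fin p ⊕ Fin k) → ℝ := ((Gᵀ * G)⁻¹)ᵀ *ᵥ c with hu
  set A : (Fin N₁ ⊕ Fin N₀) → ℝ := G *ᵥ u with hA
  -- pointwise linear forms
  have hdot : ∀ x : (Fin p ⊕ Fin k) → ℝ,
      w₁ ⬝ᵥ (Γ *ᵥ fun j => x (Sum.inr j)) = c ⬝ᵥ x := by
    intro x
    simp only [dotProduct, Matrix.mulVec, hc, Fintype.sum_sum_type, Sum.elim_inl,
      Sum.elim_inr, Pi.zero_apply, zero_mul, Finset.sum_const_zero, zero_add,
      Finset.mul_sum, Finset.sum_mul, Matrix.transpose_apply]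
    rw [Finset.sum_comm]
    exact Finset.sum_congr rfl fun j _ => Finset.sum_congr rfl fun i _ => by ring
  have hτω : ∀ ω, τhat ω = ∑ r, A r * Y ω r := by
    intro ω
    rw [hτhat ω, hdot, dotProduct_mulVec, dotProduct_mulVec]
    have h1 : c ᵥ* (Gᵀ * G)⁻¹ = u := (Matrix.mulVec_transpose _ _).symm
    have h2 : u ᵥ* Gᵀ = A := by rw [hA, Matrix.vecMul_transpose]
    rw [h1, h2]
    rfl
  have hγω : ∀ ω l, γhat ω l = ∑ s, B l s * Y ω (Sum.inr s) := by
    intro ω l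
    rw [hγhat ω l, Matrix.mulVec_mulVec]
    simp [hB, hM₀, Matrix.mulVec, dotProduct]
  -- centered variables
  set Yc : (Fin N₁ ⊕ Fin N₀) → Ωm → ℝ := fun r ω => Y ω r - m r with hYc
  have hYcL2 : ∀ r, MemLp (Yc r) 2 μ := fun r => (hL2 r).sub (memLp_const (m r))
  have hY_int : ∀ r, Integrable (fun ω => Y ω r) μ := fun r => (hL2 r).integrable one_le_two
  have hprod : ∀ r s, Integrable (fun ω => Yc r ω * Yc s ω) μ :=
    fun r s => int_mul (hYcL2 r) (hYcL2 s)
  have hcov' : ∀ r s, ∫ ω, Yc r ω * Yc s ω ∂μ = if r = s then σ2 else 0 :=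
    fun r s => hcov r s
  -- means
  have Eτ : ∫ ω, τhat ω ∂μ = ∑ r, A r * m r := by
    simp only [hτω]
    rw [integral_finset_sum _ (fun r _ => (hY_int r).const_mul (A r))]
    simp [integral_const_mul, hmean]
  have Eγ : ∀ l, ∫ ω, γhat ω l ∂μ = ∑ s, B l s * m (Sum.inr s) := by
    intro l
    simp only [hγω]
    rw [integral_finset_sum _ (fun s _ => (hY_int (Sum.inr s)).const_mul (B l s))]
    simp [integral_const_mul, hmean]
  -- centered forms
  have hτc : ∀ ω, τhat ω - ∫ ω', τhat ω' ∂μ = ∑ r, A r * Yc r ω := by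
    intro ω
    rw [hτω ω, Eτ, ← Finset.sum_sub_distrib]
    exact Finset.sum_congr rfl fun r _ => by simp [hYc, mul_sub]
  have hγc : ∀ ω l, γhat ω l - ∫ ω', γhat ω' l ∂μ = ∑ s, B l s * Yc (Sum.inr s) ω := by
    intro ω l
    rw [hγω ω l, Eγ l, ← Finset.sum_sub_distrib]
    exact Finset.sum_congr rfl fun s _ => by simp [hYc, mul_sub]
  -- first conjunct
  have mean0 : ∀ l, ∫ ω, γhat ω l ∂μ = 0 := by
    intro l
    rw [Eγ l]
    have : ∑ s, B l s * m (Sum.inr s) = (M₀ *ᵥ (Z₀ *ᵥ π)) (Sum.inr l) := by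
      simp only [hB, Matrix.mulVec, dotProduct]
      exact Finset.sum_congr rfl fun s _ => by
        rw [hmodel s]; simp [Matrix.mulVec, dotProduct]
    rw [this, hM₀, ← Matrix.mulVec_mulVec]
    exact key_ols Z₀ W₀ G₀ hG₀ hrank₀ π l
  refine ⟨mean0, fun l => ?_⟩
  -- orthogonality of A restricted to untreated rows with B
  have horth : ∑ s, A (Sum.inr s) * B l s = 0 := by
    have hAr : ∀ s, A (Sum.inr s) = (Z₀ *ᵥ fun i => u (Sum.inl i)) s := by
      intro s
      simp only [hA, Matrix.mulVec, dotProduct, Fintype.sum_sum_type, hG,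
        Matrix.fromCols_apply_inl, Matrix.fromCols_apply_inr, hZ,
        Matrix.of_apply, Matrix.mul_apply, Sum.elim_inr]
      have hzero : ∀ j : Fin k, (∑ t, D (Sum.inr s) t * Γ t j) = 0 := by
        intro j
        simp [hD]
      simp only [hzero, zero_mul, Finset.sum_const_zero, add_zero]
      rfl
    have : ∑ s, A (Sum.inr s) * B l s
        = ((G₀ᵀ * G₀)⁻¹ *ᵥ (G₀ᵀ *ᵥ (Z₀ *ᵥ fun i => u (Sum.inl i)))) (Sum.inr l) := by
      rw [Matrix.mulVec_mulVec]
      simp only [Matrix.mulVec, dotProduct, ← hM₀]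
      exact Finset.sum_congr rfl fun s _ => by rw [hAr s, mul_comm]; rfl
    rw [this]
    exact key_ols Z₀ W₀ G₀ hG₀ hrank₀ _ l
  -- covariance computation
  calc ∫ ω, (τhat ω - ∫ ω', τhat ω' ∂μ) * (γhat ω l - ∫ ω', γhat ω' l ∂μ) ∂μ
      = ∫ ω, ∑ s, ∑ r, (A r * B l s) * (Yc r ω * Yc (Sum.inr s) ω) ∂μ := by
        refine integral_congr_ae (Filter.Eventually.of_forall fun ω => ?_)
        dsimp only
        rw [hτc ω, hγc ω l, Finset.sum_mul_sum, Finset.sum_comm]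
        exact Finset.sum_congr rfl fun s _ => Finset.sum_congr rfl fun r _ => by ring
    _ = ∑ s, ∑ r, (A r * B l s) * ∫ ω, Yc r ω * Yc (Sum.inr s) ω ∂μ := by
        rw [integral_finset_sum _ (fun s _ => integrable_finset_sum _
          (fun r _ => (hprod r (Sum.inr s)).const_mul _))]
        exact Finset.sum_congr rfl fun s _ => by
          rw [integral_finset_sum _ (fun r _ => (hprod r (Sum.inr s)).const_mul _)]
          exact Finset.sum_congr rfl fun r _ => integral_const_mul _ _
    _ = ∑ s, ∑ r, (A r * B l s) * (if r = Sum.inr s then σ2 else 0) := by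
        exact Finset.sum_congr rfl fun s _ => Finset.sum_congr rfl fun r _ => by
          rw [hcov' r (Sum.inr s)]
    _ = ∑ s, (A (Sum.inr s) * B l s) * σ2 := by
        refine Finset.sum_congr rfl fun s _ => ?_
        rw [Finset.sum_eq_single (Sum.inr s) (fun r _ hr => by simp [hr])
          (fun h => absurd (Finset.mem_univ _) h)]
        simp
    _ = 0 := by
        rw [← Finset.sum_mul, horth, zero_mul]
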